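/- Consider the finite two-player game with action sets {a1, b1} and {a2, b2} and payoffs u1'(a1,a2) = 6, u1'(a1,b2) = 2, u1'(b1,a2) = 4, u1'(b1,b2) = 1, u2(a1,a2) = 0, u2(a1,b2) = 0.5, u2(b1,a2) = 2, u2(b1,b2) = 1.5 (obtained from the game with player-1 payoffs 4.5, 0.5, 4, 1 by changing player 1's cost function to zero). This game has a unique Nash equilibrium in mixed strategies, namely the pure profile (a1, b2), with payoff vector (2, 0.5). In particular, player 1's equilibrium payoff (2) is lower than his equilibrium payoff (2.5) in the game before the change, even though u1'(a,b) ≥ u1(a,b) for every action profile. -/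

import Mathlib

/-- Player 1's actions. -/
inductive P1Act where
  | a1 : P1Act
  | b1 : P1Act
deriving DecidableEq

instance : Fintype P1Act where
  elems := {P1Act.a1, P1Act.b1}
  complete := by intro x; cases x <;> simp

/-- Player 2's actions. -/
inductive P2Act where
  | a2 : P2Act
  | b2 : P2Act
deriving DecidableEq

instance : Fintype P2Act where
  elems := {P2Act.a2, P2Act.b2}
  complete := by intro x; cases x <;> simp

/-- `σ` is a mixed strategy: a probability distribution on the finite action set `A`. -/
def IsMixed {A : Type*} [Fintype A] (σ : A → ℝ) : Prop :=
  (∀ a, 0 ≤ σ a) ∧ ∑ a, σ a = 1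

/-- Expected payoff `U(σ,τ) = Σ_a Σ_b σ(a)·τ(b)·u(a,b)`. -/
def expPayoff {A B : Type*} [Fintype A] [Fintype B]
    (u : A → B → ℝ) (σ : A → ℝ) (τ : B → ℝ) : ℝ :=
  ∑ a, ∑ b, σ a * τ b * u a b

/-- `(σ,τ)` is a mixed-strategy Nash equilibrium of the two-player game `(u1,u2)`. -/
def IsNash {A B : Type*} [Fintype A] [Fintype B]
    (u1 u2 : A → B → ℝ) (σ : A → ℝ) (τ : B → ℝ) : Prop :=
  IsMixed σ ∧ IsMixed τ ∧
    (∀ σ', IsMixed σ' → expPayoff u1 σ' τ ≤ expPayoff u1 σ τ) ∧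
    (∀ τ', IsMixed τ' → expPayoff u2 σ τ' ≤ expPayoff u2 σ τ)

/-- The mixed strategy placing probability one on the pure action `a0`. -/
def pureStrat {A : Type*} [Fintype A] [DecidableEq A] (a0 : A) : A → ℝ :=
  fun a => if a = a0 then 1 else 0

/-- Player 1's payoffs before the change (base game modified by costs
`c1(a1) = -1.5, c1(b1) = 0`). -/
noncomputable def h1 : P1Act → P2Act → ℝ
  | .a1, .a2 => 4.5
  | .a1, .b2 => 0.5
  | .b1, .a2 => 4
  | .b1, .b2 => 1

/-- Player 1's payoffs after changing his cost function to zero. -/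
noncomputable def h1' : P1Act → P2Act → ℝ
  | .a1, .a2 => 6
  | .a1, .b2 => 2
  | .b1, .a2 => 4
  | .b1, .b2 => 1

/-- Player 2's payoffs (unchanged). -/
noncomputable def h2 : P1Act → P2Act → ℝ
  | .a1, .a2 => 0
  | .a1, .b2 => 0.5
  | .b1, .a2 => 2
  | .b1, .b2 => 1.5


lemma sumA (f : P1Act → ℝ) : ∑ a, f a = f .a1 + f .b1 := by
  rw [show (Finset.univ : Finset P1Act) = {P1Act.a1, P1Act.b1} by decide]; simp

lemma sumB (f : P2Act → ℝ) : ∑ b, f b = f .a2 + f .b2 := by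
  rw [show (Finset.univ : Finset P2Act) = {P2Act.a2, P2Act.b2} by decide]; simp

lemma expand1' (σ : P1Act → ℝ) (τ : P2Act → ℝ) :
    expPayoff h1' σ τ = σ .a1 * τ .a2 * 6 + σ .a1 * τ .b2 * 2
      + (σ .b1 * τ .a2 * 4 + σ .b1 * τ .b2 * 1) := by
  simp [expPayoff, sumA, sumB, h1']

lemma expand2 (σ : P1Act → ℝ) (τ : P2Act → ℝ) :
    expPayoff h2 σ τ = σ .a1 * τ .a2 * 0 + σ .a1 * τ .b2 * 0.5
      + (σ .b1 * τ .a2 * 2 + σ .b1 * τ .b2 * 1.5) := by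
  simp [expPayoff, sumA, sumB, h2]

lemma expand1 (σ : P1Act → ℝ) (τ : P2Act → ℝ) :
    expPayoff h1 σ τ = σ .a1 * τ .a2 * 4.5 + σ .a1 * τ .b2 * 0.5
      + (σ .b1 * τ .a2 * 4 + σ .b1 * τ .b2 * 1) := by
  simp [expPayoff, sumA, sumB, h1]

lemma pureA_mixed : IsMixed (pureStrat P1Act.a1) := by
  constructor
  · intro a; cases a <;> simp [pureStrat]
  · simp [sumA, pureStrat]

lemma pureB_mixed : IsMixed (pureStrat P2Act.b2) := by
  constructor
  · intro b; cases b <;> simp [pureStrat]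
  · simp [sumB, pureStrat]

/-- The game `(h1', h2)` has a unique mixed-strategy Nash equilibrium, the pure
profile `(a1, b2)`, with payoff vector `(2, 0.5)`.  In particular, player 1's
equilibrium payoff `2` is lower than his payoff `2.5` in the unique equilibrium of
the game before the change, even though `h1' ≥ h1` pointwise. -/
theorem improved_cost_game_unique_equilibrium :
    (∀ σ : P1Act → ℝ, ∀ τ : P2Act → ℝ, IsNash h1' h2 σ τ ↔
      (σ = pureStrat P1Act.a1 ∧ τ = pureStrat P2Act.b2)) ∧
    expPayoff h1' (pureStrat P1Act.a1) (pureStrat P2Act.b2) = 2 ∧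
    expPayoff h2 (pureStrat P1Act.a1) (pureStrat P2Act.b2) = 0.5 ∧
    (∀ a b, h1 a b ≤ h1' a b) ∧
    expPayoff h1' (pureStrat P1Act.a1) (pureStrat P2Act.b2) <
      expPayoff h1 (fun _ => (1 : ℝ) / 2) (fun _ => (1 : ℝ) / 2) := by
  have key : ∀ σ : P1Act → ℝ, ∀ τ : P2Act → ℝ, IsNash h1' h2 σ τ ↔
      (σ = pureStrat P1Act.a1 ∧ τ = pureStrat P2Act.b2) := by
    intro σ τ
    constructor
    · rintro ⟨⟨hσ0, hσ1⟩, ⟨hτ0, hτ1⟩, hmax1, hmax2⟩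
      rw [sumA] at hσ1; rw [sumB] at hτ1
      have hq : σ P1Act.b1 = 0 := by
        have := hmax1 (pureStrat P1Act.a1) pureA_mixed
        rw [expand1', expand1'] at this
        simp [pureStrat] at this
        nlinarith [hσ0 P1Act.b1, hτ0 P2Act.a2, hτ0 P2Act.b2]
      have hp : σ P1Act.a1 = 1 := by linarith
      have hσ : σ = pureStrat P1Act.a1 := by
        funext a; cases a <;> simp [pureStrat, hp, hq]
      have ha2 : τ P2Act.a2 = 0 := by
        have := hmax2 (pureStrat P2Act.b2) pureB_mixed
        rw [expand2, expand2] at this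
        simp [pureStrat, hp, hq] at this
        nlinarith [hτ0 P2Act.a2]
      have hτ : τ = pureStrat P2Act.b2 := by
        funext b; cases b <;> simp [pureStrat, ha2] <;> linarith
      exact ⟨hσ, hτ⟩
    · rintro ⟨rfl, rfl⟩
      refine ⟨pureA_mixed, pureB_mixed, ?_, ?_⟩
      · rintro σ' ⟨h0, h1⟩
        rw [sumA] at h1
        rw [expand1', expand1']
        simp [pureStrat]
        nlinarith [h0 P1Act.a1, h0 P1Act.b1]
      · rintro τ' ⟨h0, h1⟩
        rw [sumB] at h1
        rw [expand2, expand2]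
        simp [pureStrat]
        nlinarith [h0 P2Act.a2, h0 P2Act.b2]
  refine ⟨key, ?_, ?_, ?_, ?_⟩
  · rw [expand1']; simp [pureStrat]
  · rw [expand2]; simp [pureStrat]
  · intro a b; cases a <;> cases b <;> simp [h1, h1'] <;> norm_num
  · rw [expand1', expand1]; simp [pureStrat]; norm_num
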